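/- Let h : ℝ² → ℝ² be defined in polar coordinates by h(r,θ) = (r, θ − log r) for r > 0 and h(0) = 0 (equivalently h(x,y) = (x cos(log(x²+y²)) + y sin(log(x²+y²)), −x sin(log(x²+y²)) + y cos(log(x²+y²)))). Then h is bi-Lipschitz on a neighbourhood of 0, and for every half-line L through the origin, the direction set D(h(L \ {0})) equals the whole circle S¹. -/

import Mathlib

open Filter Metric Topology MeasureTheory

noncomputable section

abbrev E (n : ℕ) := EuclideanSpace ℝ (Fin n)

/-- Direction set of `A` at the origin. -/
def Dir (n : ℕ) (A : Set (E n)) : Set (E n) :=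
  {a | ‖a‖ = 1 ∧ ∃ x : ℕ → E n, (∀ i, x i ∈ A \ {0}) ∧
    Tendsto x atTop (nhds (0 : E n)) ∧
    Tendsto (fun i => (‖x i‖)⁻¹ • x i) atTop (nhds a)}

/-- Sea-tangle neighbourhood of degree `d` and width `C`. -/
def STg (n : ℕ) (d C : ℝ) (A : Set (E n)) : Set (E n) :=
  {x | Metric.infDist x A ≤ C * ‖x‖ ^ d}

/-- Cone over the direction set (real tangent cone). -/
def LD (n : ℕ) (A : Set (E n)) : Set (E n) :=
  {x | ∃ a ∈ Dir n A, ∃ t : ℝ, 0 ≤ t ∧ x = t • a}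

/-- Sequence selection property. -/
def SSP (n : ℕ) (S : Set (E n)) : Prop :=
  ∀ a : ℕ → E n, (∀ m, a m ≠ 0) → Tendsto a atTop (nhds (0 : E n)) →
    (∃ L ∈ Dir n S, Tendsto (fun m => (‖a m‖)⁻¹ • a m) atTop (nhds L)) →
    ∀ ε > (0:ℝ), ∃ b : ℕ → E n, (∀ m, b m ∈ S) ∧
      ∀ᶠ m in atTop, ‖a m - b m‖ ≤ ε * min ‖a m‖ ‖b m‖

/-- ST-equivalence of set-germs at the origin. -/
def STEquiv (n : ℕ) (A B : Set (E n)) : Prop :=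
  ∃ d₁ > (1:ℝ), ∃ C₁ > (0:ℝ), ∃ d₂ > (1:ℝ), ∃ C₂ > (0:ℝ), ∃ ε > (0:ℝ),
    B ∩ ball (0 : E n) ε ⊆ STg n d₁ C₁ A ∧ A ∩ ball (0 : E n) ε ⊆ STg n d₂ C₂ B


private lemma expI_sub_one_le (θ : ℝ) :
    ‖Complex.exp ((θ : ℂ) * Complex.I) - 1‖ ≤ |θ| := by
  have h1 : ‖Complex.exp ((θ : ℂ) * Complex.I) - 1‖ ^ 2 = 2 - 2 * Real.cos θ := by
    rw [Complex.sq_norm, Complex.normSq_apply]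
    simp only [Complex.sub_re, Complex.sub_im, Complex.one_re, Complex.one_im,
      Complex.exp_ofReal_mul_I_re, Complex.exp_ofReal_mul_I_im]
    nlinarith [Real.sin_sq_add_cos_sq θ]
  have h2 : 2 - 2 * Real.cos θ ≤ θ ^ 2 := by
    nlinarith [Real.one_sub_sq_div_two_le_cos (x := θ)]
  have h3 : ‖Complex.exp ((θ : ℂ) * Complex.I) - 1‖ ^ 2 ≤ |θ| ^ 2 := by
    rw [h1, sq_abs]; linarith
  calc ‖Complex.exp ((θ : ℂ) * Complex.I) - 1‖
      = Real.sqrt (‖Complex.exp ((θ : ℂ) * Complex.I) - 1‖ ^ 2) :=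
        (Real.sqrt_sq (norm_nonneg _)).symm
    _ ≤ Real.sqrt (|θ| ^ 2) := Real.sqrt_le_sqrt h3
    _ = |θ| := Real.sqrt_sq (abs_nonneg θ)

private def spf (c : ℝ) (z : ℂ) : ℂ :=
  z * Complex.exp (((c * Real.log ‖z‖ : ℝ) : ℂ) * Complex.I)

private lemma spf_abs (c : ℝ) (z : ℂ) : ‖spf c z‖ = ‖z‖ := by
  rw [spf, norm_mul, Complex.norm_exp_ofReal_mul_I, mul_one]

private lemma spf_lip_aux (c : ℝ) {z w : ℂ} (hw : ‖w‖ ≤ ‖z‖) :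
    ‖spf c z - spf c w‖ ≤ (1 + |c|) * ‖z - w‖ := by
  rcases eq_or_ne w 0 with rfl | hw0
  · simp only [spf, norm_zero, sub_zero, zero_mul, norm_mul]
    rw [Complex.norm_exp_ofReal_mul_I, mul_one]
    nlinarith [norm_nonneg z, abs_nonneg c]
  · have hs : 0 < ‖w‖ := norm_pos_iff.mpr hw0
    have hr : 0 < ‖z‖ := lt_of_lt_of_le hs hw
    set r := ‖z‖ with hrdef
    set s := ‖w‖ with hsdef
    set θ : ℝ := c * Real.log s - c * Real.log r with hθ
    have hprod : Complex.exp (((c * Real.log s : ℝ) : ℂ) * Complex.I)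
        = Complex.exp (((c * Real.log r : ℝ) : ℂ) * Complex.I)
          * Complex.exp ((θ : ℂ) * Complex.I) := by
      rw [← Complex.exp_add]
      congr 1
      push_cast [hθ]
      ring
    have key : spf c z - spf c w
        = Complex.exp (((c * Real.log r : ℝ) : ℂ) * Complex.I)
          * ((z - w) - w * (Complex.exp ((θ : ℂ) * Complex.I) - 1)) := by
      unfold spf
      rw [← hrdef, ← hsdef, hprod]
      ring
    have hlog : Real.log s ≤ Real.log r := Real.log_le_log hs hw
    have hlog2 : Real.log r - Real.log s ≤ r / s - 1 := by
      have := Real.log_le_sub_one_of_pos (x := r / s) (by positivity)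
      rwa [Real.log_div (ne_of_gt hr) (ne_of_gt hs)] at this
    have hθbound : |θ| ≤ |c| * (Real.log r - Real.log s) := by
      rw [hθ, ← mul_sub, abs_mul, abs_sub_comm, abs_of_nonneg (sub_nonneg.2 hlog)]
    have hrs : r - s ≤ ‖z - w‖ := by
      have := norm_sub_norm_le z w
      rwa [← hrdef, ← hsdef] at this
    have step : ‖spf c z - spf c w‖ ≤ ‖z - w‖ + s * |θ| := by
      rw [key, norm_mul, Complex.norm_exp_ofReal_mul_I, one_mul]
      calc ‖(z - w) - w * (Complex.exp ((θ : ℂ) * Complex.I) - 1)‖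
          ≤ ‖z - w‖ + ‖w * (Complex.exp ((θ : ℂ) * Complex.I) - 1)‖ := norm_sub_le _ _
        _ = ‖z - w‖ + s * ‖Complex.exp ((θ : ℂ) * Complex.I) - 1‖ := by
            rw [norm_mul, ← hsdef]
        _ ≤ ‖z - w‖ + s * |θ| := by
            gcongr
            exact expI_sub_one_le θ
    have hslog : s * (Real.log r - Real.log s) ≤ r - s := by
      have h1 : s * (Real.log r - Real.log s) ≤ s * (r / s - 1) := by
        gcongr
      have h2 : s * (r / s - 1) = r - s := by field_simp
      linarith
    have hsθ : s * |θ| ≤ |c| * ‖z - w‖ := by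
      calc s * |θ| ≤ s * (|c| * (Real.log r - Real.log s)) := by
            gcongr
        _ = |c| * (s * (Real.log r - Real.log s)) := by ring
        _ ≤ |c| * (r - s) := by
            gcongr
        _ ≤ |c| * ‖z - w‖ := by gcongr
    calc ‖spf c z - spf c w‖ ≤ ‖z - w‖ + s * |θ| := step
      _ ≤ ‖z - w‖ + |c| * ‖z - w‖ := by linarith
      _ = (1 + |c|) * ‖z - w‖ := by ring

private lemma spf_lip (c : ℝ) (z w : ℂ) :
    ‖spf c z - spf c w‖ ≤ (1 + |c|) * ‖z - w‖ := by
  rcases le_total ‖w‖ ‖z‖ with hle | hle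
  · exact spf_lip_aux c hle
  · rw [norm_sub_rev, norm_sub_rev z]
    exact spf_lip_aux c hle

private lemma spf_inv (c : ℝ) (z : ℂ) : spf (-c) (spf c z) = z := by
  have habs := spf_abs c z
  show spf c z * _ = z
  rw [habs]
  unfold spf
  rw [mul_assoc, ← Complex.exp_add]
  have : ((c * Real.log ‖z‖ : ℝ) : ℂ) * Complex.I
      + ((-c * Real.log ‖z‖ : ℝ) : ℂ) * Complex.I = 0 := by
    push_cast; ring
  rw [this, Complex.exp_zero, mul_one]

private lemma h_eq (h : E 2 → E 2) (hh0 : h 0 = 0)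
    (hdef : ∀ x : E 2, x ≠ 0 →
      (h x) 0 = x 0 * Real.cos (Real.log ((x 0) ^ 2 + (x 1) ^ 2)) +
                x 1 * Real.sin (Real.log ((x 0) ^ 2 + (x 1) ^ 2)) ∧
      (h x) 1 = - x 0 * Real.sin (Real.log ((x 0) ^ 2 + (x 1) ^ 2)) +
                x 1 * Real.cos (Real.log ((x 0) ^ 2 + (x 1) ^ 2)))
    (x : E 2) :
    h x = Complex.orthonormalBasisOneI.repr
      (spf (-2) (Complex.orthonormalBasisOneI.repr.symm x)) := by
  set ce := Complex.orthonormalBasisOneI.repr with hce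
  have hcoord : ∀ w : ℂ, (ce w) 0 = w.re ∧ (ce w) 1 = w.im := by
    intro w
    rw [hce, Complex.orthonormalBasisOneI_repr_apply]
    exact ⟨rfl, rfl⟩
  rcases eq_or_ne x 0 with rfl | hx
  · rw [hh0, map_zero]
    have : spf (-2) 0 = 0 := by simp [spf]
    rw [this, map_zero]
  · obtain ⟨h0, h1⟩ := hdef x hx
    set z := ce.symm x with hz
    have hzre : z.re = x 0 := by
      rw [hz, hce, Complex.orthonormalBasisOneI_repr_symm_apply]; simp
    have hzim : z.im = x 1 := by
      rw [hz, hce, Complex.orthonormalBasisOneI_repr_symm_apply]; simp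
    have hsq : ‖z‖ ^ 2 = x 0 ^ 2 + x 1 ^ 2 := by
      rw [Complex.sq_norm, Complex.normSq_apply, hzre, hzim]; ring
    set s := Real.log (x 0 ^ 2 + x 1 ^ 2) with hsdef
    have hlog : (-2 : ℝ) * Real.log ‖z‖ = -s := by
      rw [hsdef, ← hsq, Real.log_pow]; push_cast; ring
    have hre : (spf (-2) z).re = x 0 * Real.cos s + x 1 * Real.sin s := by
      rw [spf, hlog, Complex.mul_re, Complex.exp_ofReal_mul_I_re,
        Complex.exp_ofReal_mul_I_im, hzre, hzim, Real.cos_neg, Real.sin_neg]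
      ring
    have him : (spf (-2) z).im = -x 0 * Real.sin s + x 1 * Real.cos s := by
      rw [spf, hlog, Complex.mul_im, Complex.exp_ofReal_mul_I_re,
        Complex.exp_ofReal_mul_I_im, hzre, hzim, Real.cos_neg, Real.sin_neg]
      ring
    ext i
    fin_cases i
    · rw [show ((⟨0, by norm_num⟩ : Fin 2)) = (0 : Fin 2) from rfl, h0,
        (hcoord _).1, hre]
    · rw [show ((⟨1, by norm_num⟩ : Fin 2)) = (1 : Fin 2) from rfl, h1,
        (hcoord _).2, him]

theorem stmt17 (h : E 2 → E 2) (hh0 : h 0 = 0)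
    (hdef : ∀ x : E 2, x ≠ 0 →
      (h x) 0 = x 0 * Real.cos (Real.log ((x 0) ^ 2 + (x 1) ^ 2)) +
                x 1 * Real.sin (Real.log ((x 0) ^ 2 + (x 1) ^ 2)) ∧
      (h x) 1 = - x 0 * Real.sin (Real.log ((x 0) ^ 2 + (x 1) ^ 2)) +
                x 1 * Real.cos (Real.log ((x 0) ^ 2 + (x 1) ^ 2))) :
    (∃ ε > (0:ℝ), ∃ K₁ K₂ : ℝ, 0 < K₁ ∧ K₁ ≤ K₂ ∧
      ∀ x ∈ ball (0 : E 2) ε, ∀ y ∈ ball (0 : E 2) ε,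
        K₁ * ‖x - y‖ ≤ ‖h x - h y‖ ∧ ‖h x - h y‖ ≤ K₂ * ‖x - y‖) ∧
    ∀ v : E 2, ‖v‖ = 1 →
      Dir 2 (h '' ({x : E 2 | ∃ t : ℝ, 0 ≤ t ∧ x = t • v} \ {0})) =
        Metric.sphere (0 : E 2) 1 := by
  set ce := Complex.orthonormalBasisOneI.repr with hce
  have heq := h_eq h hh0 hdef
  constructor
  · refine ⟨1, one_pos, 1/3, 3, by norm_num, by norm_num, ?_⟩
    intro x _ y _
    have hxy : ‖x - y‖ = ‖ce.symm x - ce.symm y‖ := by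
      rw [← map_sub, LinearIsometryEquiv.norm_map]
    have hh : ‖h x - h y‖ = ‖spf (-2) (ce.symm x) - spf (-2) (ce.symm y)‖ := by
      rw [heq x, heq y, ← map_sub, LinearIsometryEquiv.norm_map]
    have habs2 : |(-2 : ℝ)| = 2 := by norm_num
    have hup := spf_lip (-2) (ce.symm x) (ce.symm y)
    rw [habs2] at hup
    have hdown := spf_lip 2 (spf (-2) (ce.symm x)) (spf (-2) (ce.symm y))
    have hinv : ∀ w : ℂ, spf 2 (spf (-2) w) = w := by
      intro w
      have := spf_inv (-2) w
      rwa [neg_neg] at this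
    rw [hinv, hinv, show |(2:ℝ)| = 2 by norm_num] at hdown
    rw [hxy, hh]
    constructor
    · linarith
    · linarith
  · intro v hv
    have hv0 : v ≠ 0 := by
      intro hv'
      rw [hv', norm_zero] at hv
      exact one_ne_zero hv.symm
    ext a
    simp only [Dir, Set.mem_setOf_eq, mem_sphere_zero_iff_norm]
    constructor
    · rintro ⟨ha, -⟩; exact ha
    · intro ha
      refine ⟨ha, ?_⟩
      set zv := ce.symm v with hzv
      set za := ce.symm a with hza
      have hzvabs : ‖zv‖ = 1 := by
        rw [hzv, LinearIsometryEquiv.norm_map, hv]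
      have hzaabs : ‖za‖ = 1 := by
        rw [hza, LinearIsometryEquiv.norm_map, ha]
      have hzv0 : zv ≠ 0 := by
        intro h'
        rw [h', norm_zero] at hzvabs
        norm_num at hzvabs
      set u := za * zv⁻¹ with hu
      have huabs : ‖u‖ = 1 := by
        rw [hu, norm_mul, norm_inv, hzaabs, hzvabs]
        norm_num
      have huzv : u * zv = za := by
        rw [hu]
        field_simp
      have hexp : Complex.exp ((Complex.arg u : ℂ) * Complex.I) = u := by
        have h' := Complex.norm_mul_exp_arg_mul_I u
        rwa [huabs, Complex.ofReal_one, one_mul] at h'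
      set φ := Complex.arg u with hφ
      have hπ := Real.pi_pos
      set t : ℕ → ℝ := fun m => Real.exp (-φ/2 - Real.pi*(m+1)) with ht
      have htpos : ∀ m, 0 < t m := fun m => Real.exp_pos _
      have key : ∀ m, h (t m • v) = t m • a := by
        intro m
        rw [heq]
        have hsymm : ce.symm (t m • v) = (t m : ℂ) * zv := by
          rw [LinearIsometryEquiv.map_smul, ← hzv, Complex.real_smul]
        rw [hsymm]
        have habs : ‖(t m : ℂ) * zv‖ = t m := by
          rw [norm_mul, hzvabs, mul_one, Complex.norm_real, Real.norm_eq_abs,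
            abs_of_pos (htpos m)]
        have hlogt : Real.log (t m) = -φ/2 - Real.pi*(m+1) := by
          rw [ht, Real.log_exp]
        have hspf : spf (-2) ((t m : ℂ) * zv) = (t m : ℂ) * za := by
          rw [spf, habs, hlogt]
          have harg : ((-2 * (-φ/2 - Real.pi*(m+1)) : ℝ) : ℂ) * Complex.I
              = (φ : ℂ) * Complex.I + (((m : ℤ) + 1 : ℤ) : ℂ) * (2 * Real.pi * Complex.I) := by
            push_cast
            ring
          rw [harg, Complex.exp_add, hexp, Complex.exp_int_mul_two_pi_mul_I,
            mul_one, mul_assoc, mul_comm zv u, huzv]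
        rw [hspf, ← Complex.real_smul, LinearIsometryEquiv.map_smul]
        congr 1
        rw [hza]
        exact ce.apply_symm_apply a
      have htlim : Tendsto t atTop (nhds 0) := by
        apply Real.tendsto_exp_atBot.comp
        have h1 : Tendsto (fun m : ℕ => Real.pi * ((m : ℝ) + 1)) atTop atTop := by
          apply Tendsto.const_mul_atTop hπ
          exact tendsto_atTop_add_const_right _ 1 tendsto_natCast_atTop_atTop
        have h2 : Tendsto (fun m : ℕ => -(Real.pi * ((m : ℝ) + 1))) atTop atBot :=
          tendsto_neg_atTop_atBot.comp h1
        have h3 := tendsto_atBot_add_const_left atTop (-φ/2) h2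
        exact h3.congr (fun m => by ring)
      refine ⟨fun m => t m • a, fun m => ?_, ?_, ?_⟩
      · constructor
        · exact ⟨t m • v, ⟨⟨t m, (htpos m).le, rfl⟩,
            by simp [smul_ne_zero (htpos m).ne' hv0]⟩, key m⟩
        · simp [smul_ne_zero (htpos m).ne' (by intro ha'; rw [ha', norm_zero] at ha; exact one_ne_zero ha.symm : a ≠ 0)]
      · have := htlim.smul_const a
        rwa [zero_smul] at this
      · have hnorm : ∀ m, ‖t m • a‖ = t m := by
          intro m
          rw [norm_smul, Real.norm_eq_abs, abs_of_pos (htpos m), ha, mul_one]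
        have : (fun m => (‖t m • a‖)⁻¹ • (t m • a)) = fun _ => a := by
          funext m
          rw [hnorm m, smul_smul, inv_mul_cancel₀ (htpos m).ne', one_smul]
        rw [this]
        exact tendsto_const_nhds
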